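/- Let α ∈ (0,1). Suppose L is a conditional pivot given V with conditional laws given by a Markov kernel Q from 𝒱 to 𝓛, and let m : 𝓛 → ℝ be measurable, with the map v ↦ q_α((Q(v)).map m) measurable. Then the map J defined by J(o*) = {(θ', z) ∈ Θ × 𝒵 : o(z) = o*, m(L(θ', z)) ≥ q_α((Q(V(θ', z))).map m)} is a 1−α joint coverage region: equivalently, for every P ∈ 𝒫, P{z ∈ 𝒵 : m(L(θ(P), z)) ≥ q_α((Q(V(θ(P), z))).map m)} ≥ 1 − α. -/

import Mathlib

open MeasureTheory ProbabilityTheory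

/-- The `β`-quantile of a probability measure `μ` on `ℝ`:
`q_β(μ) = inf {x : μ((−∞,x]) ≥ β}`. -/
noncomputable def lowerQuantile (μ : Measure ℝ) (β : ℝ) : ℝ :=
  sInf {x : ℝ | ENNReal.ofReal β ≤ μ (Set.Iic x)}

open Filter Topology in
lemma measure_Iio_lowerQuantile_le (ν : Measure ℝ) [IsProbabilityMeasure ν]
    {β : ℝ} (hβ : 0 < β) :
    ν (Set.Iio (lowerQuantile ν β)) ≤ ENNReal.ofReal β := by
  set S := {x : ℝ | ENNReal.ofReal β ≤ ν (Set.Iic x)} with hS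
  have hbdd : BddBelow S := by
    by_contra h
    have hall : ∀ x : ℝ, ENNReal.ofReal β ≤ ν (Set.Iic x) := by
      intro x
      obtain ⟨y, hy, hyx⟩ := not_bddBelow_iff.1 h x
      exact hy.trans (measure_mono (Set.Iic_subset_Iic.2 hyx.le))
    have hlim : Tendsto (fun n : ℕ => ν (Set.Iic (-(n : ℝ)))) atTop
        (𝓝 (ν (⋂ n : ℕ, Set.Iic (-(n : ℝ))))) :=
      tendsto_measure_iInter_atTop (fun n => measurableSet_Iic.nullMeasurableSet)
        (fun a b hab => Set.Iic_subset_Iic.2 (by exact_mod_cast neg_le_neg (by exact_mod_cast hab)))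
        ⟨0, measure_ne_top ν _⟩
    have hempty : (⋂ n : ℕ, Set.Iic (-(n : ℝ))) = ∅ := by
      ext x
      simp only [Set.mem_iInter, Set.mem_Iic, Set.mem_empty_iff_false, iff_false, not_forall]
      obtain ⟨n, hn⟩ := exists_nat_gt (-x)
      exact ⟨n, by push_neg; linarith⟩
    rw [hempty, measure_empty] at hlim
    have : ENNReal.ofReal β ≤ 0 := ge_of_tendsto' hlim fun n => hall _
    exact absurd this (by simpa using (ENNReal.ofReal_pos.2 hβ).ne')
  have key : ∀ x < lowerQuantile ν β, ν (Set.Iic x) ≤ ENNReal.ofReal β := by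
    intro x hx
    by_contra hcon
    have hxS : x ∈ S := le_of_not_ge (by simpa using hcon) |>.trans_eq rfl
    exact absurd (csInf_le hbdd hxS) (not_le.2 hx)
  have hun : Set.Iio (lowerQuantile ν β)
      = ⋃ n : ℕ, Set.Iic (lowerQuantile ν β - ((n : ℝ) + 1)⁻¹) := by
    ext x
    simp only [Set.mem_Iio, Set.mem_iUnion, Set.mem_Iic]
    constructor
    · intro hx
      obtain ⟨n, hn⟩ := exists_nat_one_div_lt (sub_pos.2 hx)
      refine ⟨n, ?_⟩
      rw [one_div] at hn
      linarith
    · rintro ⟨n, hn⟩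
      have : (0 : ℝ) < ((n : ℝ) + 1)⁻¹ := by positivity
      linarith
  rw [hun, (Monotone.directed_le (fun a b hab => Set.Iic_subset_Iic.2 (by
      have hab' : (a : ℝ) ≤ (b : ℝ) := Nat.cast_le.2 hab
      have : ((b : ℝ) + 1)⁻¹ ≤ ((a : ℝ) + 1)⁻¹ := by
        apply inv_anti₀ <;> linarith
      linarith))).measure_iUnion]
  refine iSup_le fun n => key _ ?_
  have : (0 : ℝ) < ((n : ℝ) + 1)⁻¹ := by positivity
  linarith

/-- Validity of the test-statistic based conditional-pivot JCR (Theorem 2). -/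
theorem conditional_pivot_test_statistic_JCR_valid
    {𝒵 𝒪 Θ 𝒱 𝓛 : Type*}
    [MeasurableSpace 𝒵] [MeasurableSpace 𝒪] [MeasurableSpace Θ]
    [MeasurableSpace 𝒱] [MeasurableSpace 𝓛]
    (𝔓 : Set (Measure 𝒵)) (hprob : ∀ P ∈ 𝔓, IsProbabilityMeasure P)
    (θ : Measure 𝒵 → Θ)
    (o : 𝒵 → 𝒪) (ho : Measurable o)
    (L : Θ × 𝒵 → 𝓛) (hL : Measurable L)
    (V : Θ × 𝒵 → 𝒱) (hV : Measurable V)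
    (α : ℝ) (hα : α ∈ Set.Ioo (0 : ℝ) 1)
    (Q : Kernel 𝒱 𝓛) [IsMarkovKernel Q]
    (hpivot : ∀ P ∈ 𝔓,
      P.map (fun z => (V (θ P, z), L (θ P, z)))
        = (P.map (fun z => V (θ P, z))).compProd Q)
    (m : 𝓛 → ℝ) (hm : Measurable m)
    (hq : Measurable (fun v : 𝒱 => lowerQuantile ((Q v).map m) α))
    (J : 𝒪 → Set (Θ × 𝒵))
    (hJ : ∀ ostar : 𝒪, J ostar =
      {p : Θ × 𝒵 | o p.2 = ostar ∧ lowerQuantile ((Q (V p)).map m) α ≤ m (L p)})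
    (hmeas : ∀ P ∈ 𝔓, MeasurableSet {z : 𝒵 | (θ P, z) ∈ J (o z)}) :
    ∀ P ∈ 𝔓,
      ENNReal.ofReal (1 - α) ≤ P {z : 𝒵 | (θ P, z) ∈ J (o z)} ∧
      ENNReal.ofReal (1 - α) ≤
        P {z : 𝒵 | lowerQuantile ((Q (V (θ P, z))).map m) α ≤ m (L (θ P, z))} := by
  intro P hP
  haveI := hprob P hP
  set qf : 𝒱 → ℝ := fun v => lowerQuantile ((Q v).map m) α with hqf
  -- the key inequality
  have hVm : Measurable (fun z : 𝒵 => V (θ P, z)) :=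
    hV.comp (measurable_const.prodMk measurable_id)
  have hLm : Measurable (fun z : 𝒵 => L (θ P, z)) :=
    hL.comp (measurable_const.prodMk measurable_id)
  have hgm : Measurable (fun z : 𝒵 => (V (θ P, z), L (θ P, z))) := hVm.prodMk hLm
  set μ : Measure 𝒱 := P.map (fun z => V (θ P, z)) with hμ
  haveI : IsProbabilityMeasure μ := Measure.isProbabilityMeasure_map hVm.aemeasurable
  have hT : MeasurableSet {p : 𝒱 × 𝓛 | qf p.1 ≤ m p.2} :=
    measurableSet_le (hq.comp measurable_fst) (hm.comp measurable_snd)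
  have key : ENNReal.ofReal (1 - α)
      ≤ P {z : 𝒵 | qf (V (θ P, z)) ≤ m (L (θ P, z))} := by
    have hset : {z : 𝒵 | qf (V (θ P, z)) ≤ m (L (θ P, z))}
        = (fun z : 𝒵 => (V (θ P, z), L (θ P, z))) ⁻¹' {p : 𝒱 × 𝓛 | qf p.1 ≤ m p.2} := rfl
    rw [hset, ← Measure.map_apply hgm hT, hpivot P hP,
      Measure.compProd_apply hT]
    have hpt : ∀ v : 𝒱, ENNReal.ofReal (1 - α)
        ≤ Q v (Prod.mk v ⁻¹' {p : 𝒱 × 𝓛 | qf p.1 ≤ m p.2}) := by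
      intro v
      haveI : IsProbabilityMeasure ((Q v).map m) := Measure.isProbabilityMeasure_map hm.aemeasurable
      have hprev : Prod.mk v ⁻¹' {p : 𝒱 × 𝓛 | qf p.1 ≤ m p.2}
          = {l : 𝓛 | m l < qf v}ᶜ := by
        ext l; simp [not_lt]
      have hlt : Q v {l : 𝓛 | m l < qf v} ≤ ENNReal.ofReal α := by
        have : {l : 𝓛 | m l < qf v} = m ⁻¹' Set.Iio (qf v) := rfl
        rw [this, ← Measure.map_apply hm measurableSet_Iio]
        exact measure_Iio_lowerQuantile_le _ hα.1
      have hms : MeasurableSet {l : 𝓛 | m l < qf v} := hm measurableSet_Iio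
      rw [hprev, measure_compl hms (measure_ne_top _ _), measure_univ]
      calc ENNReal.ofReal (1 - α) = 1 - ENNReal.ofReal α := by
            rw [← ENNReal.ofReal_one, ← ENNReal.ofReal_sub _ hα.1.le]
        _ ≤ 1 - Q v {l : 𝓛 | m l < qf v} := tsub_le_tsub le_rfl hlt
    calc ENNReal.ofReal (1 - α) = ∫⁻ _, ENNReal.ofReal (1 - α) ∂μ := by
          rw [lintegral_const, measure_univ, mul_one]
      _ ≤ ∫⁻ v, Q v (Prod.mk v ⁻¹' {p : 𝒱 × 𝓛 | qf p.1 ≤ m p.2}) ∂μ :=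
          lintegral_mono hpt
  refine ⟨?_, key⟩
  have : {z : 𝒵 | (θ P, z) ∈ J (o z)} = {z : 𝒵 | qf (V (θ P, z)) ≤ m (L (θ P, z))} := by
    ext z
    simp [hJ (o z), hqf]
  rw [this]
  exact key
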